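/- The poset P₁ = (ℕ^ℕ × ℕ) ∪ B ∪ {⊤₁} described in the context is a dcpo; moreover, every directed subset of P₁ without a greatest element is of the form {(f₀, n) : n ∈ N} for a fixed f₀ ∈ ℕ^ℕ and an infinite N ⊆ ℕ, or is a directed subset cofinally contained in B. -/
import Mathlib


/-- A subset `D` is directed with respect to the relation `le`:
it is nonempty and any two elements have an upper bound in `D`. -/
def DirectedOn' {α : Type*} (le : α → α → Prop) (D : Set α) : Prop :=
  D.Nonempty ∧ ∀ x ∈ D, ∀ y ∈ D, ∃ z ∈ D, le x z ∧ le y z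

/-- `u` is a least upper bound of `D` with respect to the relation `le`. -/
def IsLub' {α : Type*} (le : α → α → Prop) (D : Set α) (u : α) : Prop :=
  (∀ x ∈ D, le x u) ∧ ∀ v, (∀ x ∈ D, le x v) → le u v

/-- Every directed subset has a least upper bound: `le` makes the carrier a dcpo. -/
def IsDcpoRel {α : Type*} (le : α → α → Prop) : Prop :=
  ∀ D : Set α, DirectedOn' le D → ∃ u, IsLub' le D u

/-- `U` is Scott open with respect to `le`: it is an upper set and every directed subset
whose least upper bound lies in `U` meets `U`. -/
def ScottOpen' {α : Type*} (le : α → α → Prop) (U : Set α) : Prop :=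
  (∀ x y, le x y → x ∈ U → y ∈ U) ∧
    ∀ D u, DirectedOn' le D → IsLub' le D u → u ∈ U → (D ∩ U).Nonempty

/-- `A` is Scott closed with respect to `le`: it is a lower set and contains the least upper
bounds of its directed subsets. -/
def ScottClosed' {α : Type*} (le : α → α → Prop) (A : Set α) : Prop :=
  (∀ x y, le x y → y ∈ A → x ∈ A) ∧
    ∀ D u, D ⊆ A → DirectedOn' le D → IsLub' le D u → u ∈ A

/-- Sobriety of the Scott space of `le`: the space is T₀ and every irreducible Scott closed
subset is the Scott closure `↓x = {y | le y x}` of a unique point `x`. -/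
def SoberRel {α : Type*} (le : α → α → Prop) : Prop :=
  (∀ x y : α, (∀ U : Set α, ScottOpen' le U → (x ∈ U ↔ y ∈ U)) → x = y) ∧
    ∀ C : Set α, ScottClosed' le C → C.Nonempty →
      (∀ A B : Set α, ScottClosed' le A → ScottClosed' le B → C ⊆ A ∪ B → C ⊆ A ∨ C ⊆ B) →
      ∃! x : α, C = {y | le y x}

/-! ### The posets `M`, `L`, `B`, `P₁`, `P₂` of Miao, Xi, Jia, Li, Zhao -/

/-- `ℕ^{<ℕ}`: nonempty finite words over `ℕ`. -/
abbrev NWord : Type := {l : List ℕ // l ≠ []}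

/-- The prefix order on nonempty finite words. -/
def wordLE (v w : NWord) : Prop := v.1 <+: w.1

/-- The word of length 1 corresponding to a natural number. -/
def word1 (k : ℕ) : NWord := ⟨[k], by simp⟩

/-- `s.k`: the word `s` extended by the letter `k`. -/
def wordSnoc (s : NWord) (k : ℕ) : NWord := ⟨s.1 ++ [k], by simp⟩

/-- The poset `M = ℕ ⊔ ℕ^{<ℕ}`, the disjoint sum of `ℕ` and the words. -/
abbrev Mt : Type := ℕ ⊕ NWord

/-- The (disjoint sum) order on `M`. -/
def Mle : Mt → Mt → Prop
  | Sum.inl a, Sum.inl b => a ≤ b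
  | Sum.inr v, Sum.inr w => wordLE v w
  | _, _ => False

/-- The strict order on `M`. -/
def Mlt (x y : Mt) : Prop := Mle x y ∧ x ≠ y

/-- Pairs `(a, b)` of naturals with `a < b`. -/
abbrev Pairt : Type := {p : ℕ × ℕ // p.1 < p.2}

/-- The poset `L = ({(a,b) : a < b} × M) ∪ {⊤}`; `none` is the top element `⊤` and
`some (p, x)` is the element `x_{a,b}` for `p = (a,b)`. -/
abbrev Lt : Type := Option (Pairt × Mt)

/-- The strict order on `L`: everything (other than `⊤`) is strictly below `⊤ = none`, and
`x_{a,b} < y_{a,b}` iff `x < y` in `M` (with the same tag `(a,b)`). -/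
def Llt (u v : Lt) : Prop :=
  (u ≠ none ∧ v = none) ∨ ∃ p x y, u = some (p, x) ∧ v = some (p, y) ∧ Mlt x y

/-- The carrier of the poset `B = ℕ × ℕ × L`. -/
abbrev Bt : Type := ℕ × ℕ × Lt

/-- `⊏₁`: `(m, n, ℓ) ⊏₁ (m, n, ℓ')` whenever `ℓ < ℓ'` in `L`. -/
def sq1 : Bt → Bt → Prop := fun x y =>
  ∃ m n u v, x = (m, n, u) ∧ y = (m, n, v) ∧ Llt u v

/-- `⊏₂`: `(a, n, x_{a,b}) ⊏₂ (f_{a,b}(x), n+1, ⊤)` for a word `x ∈ ℕ^{<ℕ}`. -/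
def sq2 (f : Pairt → NWord → ℕ) : Bt → Bt → Prop := fun x y =>
  ∃ (n : ℕ) (p : Pairt) (w : NWord),
    x = (p.1.1, n, some (p, Sum.inr w)) ∧ y = (f p w, n + 1, (none : Lt))

/-- `⊏₃`: `(b, n, x_{a,b}) ⊏₃ (f_{a,b}(x), n+1, ⊤)` for `x ∈ ℕ`, regarded as a word of
length 1. -/
def sq3 (f : Pairt → NWord → ℕ) : Bt → Bt → Prop := fun x y =>
  ∃ (n k : ℕ) (p : Pairt),
    x = (p.1.2, n, some (p, Sum.inl k)) ∧ y = (f p (word1 k), n + 1, (none : Lt))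

/-- `⊏₄`: `(f_{a,b}(s), n, x_{a,b}) ⊏₄ (f_{a,b}(s.x), n, ⊤)` for a word `s` and `x ∈ ℕ`. -/
def sq4 (f : Pairt → NWord → ℕ) : Bt → Bt → Prop := fun x y =>
  ∃ (n k : ℕ) (p : Pairt) (s : NWord),
    x = (f p s, n, some (p, Sum.inl k)) ∧ y = (f p (wordSnoc s k), n, (none : Lt))

/-- `⊏ = ⊏₁ ∪ ⊏₂ ∪ ⊏₃ ∪ ⊏₄ ∪ ⊏₁;⊏₂ ∪ ⊏₁;⊏₃ ∪ ⊏₁;⊏₄`. -/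
def Bsq (f : Pairt → NWord → ℕ) : Bt → Bt → Prop := fun x y =>
  sq1 x y ∨ sq2 f x y ∨ sq3 f x y ∨ sq4 f x y ∨
    (∃ z, sq1 x z ∧ sq2 f z y) ∨ (∃ z, sq1 x z ∧ sq3 f z y) ∨ (∃ z, sq1 x z ∧ sq4 f z y)

/-- The order `⊑` on `B`: the reflexive closure of `⊏`. -/
def Ble (f : Pairt → NWord → ℕ) (x y : Bt) : Prop := x = y ∨ Bsq f x y

/-- The hypotheses on the data `i`, `f`: `i` is an injection into `P(ℕ)` with pairwise
disjoint values satisfying `n < k` for all `k ∈ i (m, n)`, and each `f_{a,b}` is a monotone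
injection of `ℕ^{<ℕ}` (with the prefix order) into `i (a, b)`. -/
structure IFData (i : Pairt → Set ℕ) (f : Pairt → NWord → ℕ) : Prop where
  inj : Function.Injective i
  disj : ∀ p q : Pairt, p ≠ q → i p ∩ i q = ∅
  gt : ∀ p : Pairt, ∀ k ∈ i p, p.1.2 < k
  mem : ∀ p w, f p w ∈ i p
  finj : ∀ p, Function.Injective (f p)
  fmono : ∀ p v w, wordLE v w → f p v ≤ f p w

/-- The carrier of the poset `P₁ = (ℕ^ℕ × ℕ) ∪ B ∪ {⊤₁}`. -/
abbrev P1t : Type := ((ℕ → ℕ) × ℕ) ⊕ Bt ⊕ Unit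

/-- The top element `⊤₁` of `P₁`. -/
def P1top : P1t := Sum.inr (Sum.inr ())

/-- The inclusion of `B` into `P₁`. -/
def P1ofB (b : Bt) : P1t := Sum.inr (Sum.inl b)

/-- The strict order `<₁ ∪ <₂ ∪ <₃ ∪ <₄ ∪ <₁;<₃` of `P₁`:
`(g, n) <₁ (g, m)` iff `n < m`; `<₂` is `⊏` on `B`; `(g, n) <₃ (g(n), n, ⊤)`;
`x <₄ ⊤₁` for `x ≠ ⊤₁`; and `(g, n) <₁;<₃ (g(m), m, ⊤)` for `n < m`. -/
def P1lt (f : Pairt → NWord → ℕ) : P1t → P1t → Prop := fun x y =>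
  (∃ (g : ℕ → ℕ) (n m : ℕ), x = Sum.inl (g, n) ∧ y = Sum.inl (g, m) ∧ n < m) ∨
  (∃ b c : Bt, x = P1ofB b ∧ y = P1ofB c ∧ Bsq f b c) ∨
  (∃ (g : ℕ → ℕ) (n : ℕ), x = Sum.inl (g, n) ∧ y = P1ofB (g n, n, (none : Lt))) ∨
  (x ≠ P1top ∧ y = P1top) ∨
  (∃ (g : ℕ → ℕ) (n m : ℕ), x = Sum.inl (g, n) ∧ n < m ∧ y = P1ofB (g m, m, (none : Lt)))

/-- The order of `P₁`: the reflexive closure of the strict order. -/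
def P1le (f : Pairt → NWord → ℕ) (x y : P1t) : Prop := x = y ∨ P1lt f x y

section MXJLZAux

variable {i : Pairt → Set ℕ} {f : Pairt → NWord → ℕ}

/-! ### M-level lemmas -/

lemma Mle_refl (x : Mt) : Mle x x := by
  cases x with
  | inl a => exact Nat.le_refl a
  | inr v => exact List.prefix_refl v.1

lemma Mle_trans : ∀ {x y z : Mt}, Mle x y → Mle y z → Mle x z
  | Sum.inl _, Sum.inl _, Sum.inl _, h1, h2 => Nat.le_trans h1 h2
  | Sum.inr _, Sum.inr _, Sum.inr _, h1, h2 => List.IsPrefix.trans h1 h2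
  | Sum.inl _, Sum.inr _, _, h1, _ => h1.elim
  | Sum.inr _, Sum.inl _, _, h1, _ => h1.elim
  | Sum.inl _, Sum.inl _, Sum.inr _, _, h2 => h2.elim
  | Sum.inr _, Sum.inr _, Sum.inl _, _, h2 => h2.elim

lemma Mle_antisymm : ∀ {x y : Mt}, Mle x y → Mle y x → x = y
  | Sum.inl _, Sum.inl _, h1, h2 => congrArg Sum.inl (Nat.le_antisymm h1 h2)
  | Sum.inr v, Sum.inr w, h1, h2 => by
      have h1' : v.1 <+: w.1 := h1
      have h2' : w.1 <+: v.1 := h2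
      exact congrArg Sum.inr (Subtype.ext
        (h1'.eq_of_length (Nat.le_antisymm h1'.length_le h2'.length_le)))
  | Sum.inl _, Sum.inr _, h1, _ => h1.elim
  | Sum.inr _, Sum.inl _, h1, _ => h1.elim

lemma Mlt_trans {x y z : Mt} (h1 : Mlt x y) (h2 : Mlt y z) : Mlt x z :=
  ⟨Mle_trans h1.1 h2.1, fun he => h2.2 (Mle_antisymm h2.1 (he ▸ h1.1))⟩

/-- A nonempty subset of `M` bounded above has a greatest element. -/
lemma M_bdd_greatest (X : Set Mt) (hne : X.Nonempty) (y : Mt) (hb : ∀ x ∈ X, Mle x y) :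
    ∃ g ∈ X, ∀ x ∈ X, Mle x g := by
  classical
  obtain ⟨x₀, hx₀⟩ := hne
  cases y with
  | inl b =>
    have hKb : BddAbove {k | Sum.inl k ∈ X} := by
      refine ⟨b, fun k hk => ?_⟩
      exact hb _ hk
    have hKne : Set.Nonempty {k | Sum.inl k ∈ X} := by
      cases x₀ with
      | inl k => exact ⟨k, hx₀⟩
      | inr w => exact (hb _ hx₀).elim
    refine ⟨Sum.inl (sSup {k | Sum.inl k ∈ X}), Nat.sSup_mem hKne hKb, ?_⟩
    intro x hx
    cases x with
    | inl k => exact le_csSup hKb hx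
    | inr w => exact (hb _ hx).elim
  | inr w =>
    have hSb : BddAbove {ℓ | ∃ v : NWord, Sum.inr v ∈ X ∧ v.1.length = ℓ} := by
      refine ⟨w.1.length, ?_⟩
      rintro ℓ ⟨v, hv, rfl⟩
      exact List.IsPrefix.length_le (hb _ hv)
    have hSne : Set.Nonempty {ℓ | ∃ v : NWord, Sum.inr v ∈ X ∧ v.1.length = ℓ} := by
      cases x₀ with
      | inl k => exact (hb _ hx₀).elim
      | inr v => exact ⟨v.1.length, v, hx₀, rfl⟩
    obtain ⟨g, hgX, hglen⟩ := Nat.sSup_mem hSne hSb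
    refine ⟨Sum.inr g, hgX, ?_⟩
    intro x hx
    cases x with
    | inl k => exact (hb _ hx).elim
    | inr v =>
      have h1 : v.1 <+: w.1 := hb _ hx
      have h2 : g.1 <+: w.1 := hb _ hgX
      rcases List.prefix_or_prefix_of_prefix h1 h2 with h | h
      · exact h
      · have hlen : v.1.length ≤ g.1.length := by
          rw [hglen]
          exact le_csSup hSb ⟨v, hx, rfl⟩
        have heq : g.1 = v.1 := h.eq_of_length (Nat.le_antisymm h.length_le hlen)
        show v.1 <+: g.1
        rw [heq]

/-! ### L-level lemmas -/

lemma Llt_none_left {v : Lt} : ¬ Llt none v := by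
  rintro (⟨h, _⟩ | ⟨p, x, y, h, _, _⟩) <;> simp at h

lemma Llt_src {u v : Lt} (h : Llt u v) : ∃ (p : Pairt) (w : Mt), u = some (p, w) := by
  rcases h with ⟨hne, _⟩ | ⟨p, a, b, rfl, _, _⟩
  · obtain ⟨a, rfl⟩ := Option.ne_none_iff_exists'.mp hne
    exact ⟨a.1, a.2, rfl⟩
  · exact ⟨p, a, rfl⟩

lemma Llt_trans {u v w : Lt} (h1 : Llt u v) (h2 : Llt v w) : Llt u w := by
  rcases h1 with ⟨hu, rfl⟩ | ⟨p, x, y, rfl, rfl, hxy⟩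
  · exact absurd h2 Llt_none_left
  · rcases h2 with ⟨_, rfl⟩ | ⟨q, x', y', hv, rfl, h2'⟩
    · exact Or.inl ⟨by simp, rfl⟩
    · simp only [Option.some.injEq, Prod.mk.injEq] at hv
      obtain ⟨rfl, rfl⟩ := hv
      exact Or.inr ⟨p, x, y', rfl, rfl, Mlt_trans hxy h2'⟩

/-! ### B-level lemmas -/

lemma sq1_intro {m n : ℕ} {u v : Lt} (h : Llt u v) : sq1 (m, n, u) (m, n, v) :=
  ⟨m, n, u, v, rfl, rfl, h⟩

lemma Bsq_src {x y : Bt} (h : Bsq f x y) : ∃ (p : Pairt) (w : Mt), x.2.2 = some (p, w) := by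
  rcases h with ⟨m, n, u, v, rfl, _, hlt⟩ | ⟨n, p, w, rfl, _⟩ | ⟨n, k, p, rfl, _⟩
    | ⟨n, k, p, s, rfl, _⟩ | ⟨z, ⟨m, n, u, v, rfl, _, hlt⟩, _⟩
    | ⟨z, ⟨m, n, u, v, rfl, _, hlt⟩, _⟩ | ⟨z, ⟨m, n, u, v, rfl, _, hlt⟩, _⟩
  · obtain ⟨p, w, rfl⟩ := Llt_src hlt; exact ⟨p, w, rfl⟩
  · exact ⟨p, Sum.inr w, rfl⟩
  · exact ⟨p, Sum.inl k, rfl⟩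
  · exact ⟨p, Sum.inl k, rfl⟩
  · obtain ⟨p, w, rfl⟩ := Llt_src hlt; exact ⟨p, w, rfl⟩
  · obtain ⟨p, w, rfl⟩ := Llt_src hlt; exact ⟨p, w, rfl⟩
  · obtain ⟨p, w, rfl⟩ := Llt_src hlt; exact ⟨p, w, rfl⟩

lemma Bsq_some_tgt {x : Bt} {m n : ℕ} {p : Pairt} {w : Mt}
    (h : Bsq f x (m, n, some (p, w))) : ∃ v, x = (m, n, some (p, v)) ∧ Mlt v w := by
  rcases h with ⟨m', n', u, v, rfl, hy, hlt⟩ | ⟨n', p', w', _, hy⟩ | ⟨n', k, p', _, hy⟩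
    | ⟨n', k, p', s, _, hy⟩ | ⟨z, _, ⟨n', p', w', _, hy⟩⟩ | ⟨z, _, ⟨n', k, p', _, hy⟩⟩
    | ⟨z, _, ⟨n', k, p', s, _, hy⟩⟩
  · simp only [Prod.mk.injEq] at hy
    obtain ⟨rfl, rfl, rfl⟩ := hy
    rcases hlt with ⟨_, hv⟩ | ⟨q, a, b, rfl, hv, hab⟩
    · simp at hv
    · simp only [Option.some.injEq, Prod.mk.injEq] at hv
      obtain ⟨rfl, rfl⟩ := hv
      exact ⟨a, rfl, hab⟩
  all_goals simp at hy

lemma Ble_some_tgt {e : Bt} {m n : ℕ} {p : Pairt} {w : Mt}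
    (h : Ble f e (m, n, some (p, w))) : ∃ v, e = (m, n, some (p, v)) ∧ Mle v w := by
  rcases h with rfl | h
  · exact ⟨w, rfl, Mle_refl w⟩
  · obtain ⟨v, hv, hm⟩ := Bsq_some_tgt h
    exact ⟨v, hv, hm.1⟩

lemma Bsq_trans {x y z : Bt} (h1 : Bsq f x y) (h2 : Bsq f y z) : Bsq f x z := by
  obtain ⟨p, w, hy⟩ := Bsq_src h2
  obtain ⟨m, n, u⟩ := y
  obtain rfl : u = some (p, w) := hy
  obtain ⟨v, rfl, hvw⟩ := Bsq_some_tgt h1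
  have hxy : Llt (some (p, v)) (some (p, w)) := Or.inr ⟨p, v, w, rfl, rfl, hvw⟩
  rcases h2 with ⟨m', n', u', v', he, rfl, hlt⟩ | h | h | h
    | ⟨c, ⟨m', n', u', v', he, rfl, hlt⟩, hc⟩ | ⟨c, ⟨m', n', u', v', he, rfl, hlt⟩, hc⟩
    | ⟨c, ⟨m', n', u', v', he, rfl, hlt⟩, hc⟩
  · simp only [Prod.mk.injEq] at he
    obtain ⟨rfl, rfl, rfl⟩ := he
    exact Or.inl (sq1_intro (Llt_trans hxy hlt))
  · exact Or.inr (Or.inr (Or.inr (Or.inr (Or.inl ⟨_, sq1_intro hxy, h⟩))))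
  · exact Or.inr (Or.inr (Or.inr (Or.inr (Or.inr (Or.inl ⟨_, sq1_intro hxy, h⟩)))))
  · exact Or.inr (Or.inr (Or.inr (Or.inr (Or.inr (Or.inr ⟨_, sq1_intro hxy, h⟩)))))
  · simp only [Prod.mk.injEq] at he
    obtain ⟨rfl, rfl, rfl⟩ := he
    exact Or.inr (Or.inr (Or.inr (Or.inr (Or.inl ⟨_, sq1_intro (Llt_trans hxy hlt), hc⟩))))
  · simp only [Prod.mk.injEq] at he
    obtain ⟨rfl, rfl, rfl⟩ := he
    exact Or.inr (Or.inr (Or.inr (Or.inr (Or.inr (Or.inl ⟨_, sq1_intro (Llt_trans hxy hlt), hc⟩)))))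
  · simp only [Prod.mk.injEq] at he
    obtain ⟨rfl, rfl, rfl⟩ := he
    exact Or.inr (Or.inr (Or.inr (Or.inr (Or.inr (Or.inr ⟨_, sq1_intro (Llt_trans hxy hlt), hc⟩)))))

lemma Bsq_irrefl {x : Bt} (h : Bsq f x x) : False := by
  obtain ⟨p, w, hy⟩ := Bsq_src h
  obtain ⟨m, n, u⟩ := x
  obtain rfl : u = some (p, w) := hy
  obtain ⟨v, hx, hvw⟩ := Bsq_some_tgt h
  simp only [Prod.mk.injEq, Option.some.injEq] at hx
  exact hvw.2 hx.2.2.2.symm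

end MXJLZAux

section BCore

variable {i : Pairt → Set ℕ} {f : Pairt → NWord → ℕ}

lemma Ble_none {e : Bt} {m n : ℕ} {p : Pairt} {x : Mt} (he : e = (m, n, some (p, x))) :
    Ble f e (m, n, (none : Lt)) := by
  subst he
  exact Or.inr (Or.inl (sq1_intro (Or.inl ⟨by simp, rfl⟩)))

lemma mem_le_sum {k : ℕ} {l : List ℕ} (h : k ∈ l) : k ≤ l.sum := by
  induction l with
  | nil => simp at h
  | cons a t ih =>
    rcases List.mem_cons.mp h with rfl | h
    · simp [List.sum_cons]
    · have := ih h
      simp only [List.sum_cons]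
      omega

/-- The central structure lemma for directed subsets of `B` without greatest element. -/
lemma Bcore (hif : IFData i f) {D : Set Bt} (hdir : DirectedOn' (Ble f) D)
    (hng : ¬ ∃ g ∈ D, ∀ x ∈ D, Ble f x g) :
    ∃ (m n : ℕ) (p : Pairt),
      (∀ e ∈ D, ∃ x, e = (m, n, some (p, x))) ∧
      (∀ e ∈ D, Ble f e (m, n, (none : Lt))) ∧
      (∀ z : Bt, (∀ e ∈ D, Ble f e z) → z = (m, n, (none : Lt))) := by
  classical
  obtain ⟨hne, hup⟩ := hdir
  -- Step 1: every element has a `some` third component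
  have hsome : ∀ e ∈ D, ∃ (m n : ℕ) (p : Pairt) (x : Mt), e = (m, n, some (p, x)) := by
    intro e he
    obtain ⟨m, n, u⟩ := e
    cases u with
    | some a => exact ⟨m, n, a.1, a.2, by rfl⟩
    | none =>
      exfalso; apply hng
      refine ⟨(m, n, none), he, fun x hx => ?_⟩
      obtain ⟨c, hc, hec, hxc⟩ := hup _ he _ hx
      rcases hec with rfl | hec
      · exact hxc
      · obtain ⟨p, w, hpw⟩ := Bsq_src hec
        simp at hpw
  obtain ⟨e₀, he₀⟩ := hne
  obtain ⟨m, n, p, x₀, rfl⟩ := hsome e₀ he₀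
  -- Step 2: all elements share the coordinates (m, n, p)
  have hshape : ∀ e ∈ D, ∃ x, e = (m, n, some (p, x)) := by
    intro e he
    obtain ⟨c, hc, hec, he₀c⟩ := hup _ he _ he₀
    obtain ⟨m', n', q, xc, rfl⟩ := hsome c hc
    obtain ⟨v, rfl, _⟩ := Ble_some_tgt hec
    obtain ⟨v₀, he₀', _⟩ := Ble_some_tgt he₀c
    simp only [Prod.mk.injEq, Option.some.injEq] at he₀'
    obtain ⟨rfl, rfl, rfl, _⟩ := he₀'
    exact ⟨v, rfl⟩
  -- Step 3: the M-components form a directed set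
  have hdirM : ∀ x y : Mt, (m, n, some (p, x)) ∈ D → (m, n, some (p, y)) ∈ D →
      ∃ z : Mt, (m, n, some (p, z)) ∈ D ∧ Mle x z ∧ Mle y z := by
    intro x y hx hy
    obtain ⟨c, hc, h1, h2⟩ := hup _ hx _ hy
    obtain ⟨xc, rfl⟩ := hshape c hc
    obtain ⟨v, hv, hle1⟩ := Ble_some_tgt h1
    obtain ⟨v', hv', hle2⟩ := Ble_some_tgt h2
    simp at hv hv'
    obtain rfl := hv
    obtain rfl := hv'
    exact ⟨xc, hc, hle1, hle2⟩
  -- Step 4: no upper bound for the M-components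
  have hMbdd : ∀ y : Mt, (∀ x : Mt, (m, n, some (p, x)) ∈ D → Mle x y) → False := by
    intro y hy
    obtain ⟨g, hgX, hgmax⟩ := M_bdd_greatest {x : Mt | (m, n, some (p, x)) ∈ D} ⟨x₀, he₀⟩ y hy
    apply hng
    refine ⟨(m, n, some (p, g)), hgX, fun e he => ?_⟩
    obtain ⟨x, rfl⟩ := hshape e he
    by_cases hxg : x = g
    · subst hxg; exact Or.inl rfl
    · exact Or.inr (Or.inl (sq1_intro (Or.inr ⟨p, x, g, rfl, rfl, hgmax x he, hxg⟩)))
  -- Step 5: all M-components are on the same side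
  have hside : (∀ x : Mt, (m, n, some (p, x)) ∈ D → ∃ k, x = Sum.inl k) ∨
      (∀ x : Mt, (m, n, some (p, x)) ∈ D → ∃ w, x = Sum.inr w) := by
    cases x₀ with
    | inl k₀ =>
      left; intro x hx
      obtain ⟨z, _, h1, h2⟩ := hdirM x (Sum.inl k₀) hx he₀
      cases z with
      | inl kz =>
        cases x with
        | inl k => exact ⟨k, rfl⟩
        | inr w => exact h1.elim
      | inr wz => exact h2.elim
    | inr w₀ =>
      right; intro x hx
      obtain ⟨z, _, h1, h2⟩ := hdirM x (Sum.inr w₀) hx he₀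
      cases z with
      | inr wz =>
        cases x with
        | inr w => exact ⟨w, rfl⟩
        | inl k => exact h1.elim
      | inl kz => exact h2.elim
  refine ⟨m, n, p, hshape, fun e he => Ble_none (hshape e he).choose_spec, ?_⟩
  -- Step 6: uniqueness of the upper bound
  intro z hz
  obtain ⟨m', n', u⟩ := z
  cases u with
  | some a =>
    obtain ⟨q, y⟩ := a
    exfalso
    obtain ⟨v, hv, _⟩ := Ble_some_tgt (hz _ he₀)
    simp only [Prod.mk.injEq, Option.some.injEq] at hv
    obtain ⟨rfl, rfl, rfl, _⟩ := hv
    apply hMbdd y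
    intro x hx
    obtain ⟨v', hv', hle⟩ := Ble_some_tgt (hz _ hx)
    simp at hv'
    obtain rfl := hv'
    exact hle
  | none =>
    by_cases hco : m' = m ∧ n' = n
    · obtain ⟨rfl, rfl⟩ := hco; rfl
    exfalso
    have hroute : ∀ x : Mt, (m, n, some (p, x)) ∈ D →
        Bsq f (m, n, some (p, x)) (m', n', (none : Lt)) := by
      intro x hx
      rcases hz _ hx with he | hbs
      · simp at he
      · exact hbs
    rcases hside with hK | hW
    · -- all components are naturals
      have key : ∀ x : Mt, (m, n, some (p, x)) ∈ D →
          ∃ k, x = Sum.inl k ∧ ∃ w : NWord, m' = f p w ∧ k ≤ w.1.sum := by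
        intro x hx
        obtain ⟨k, rfl⟩ := hK x hx
        refine ⟨k, rfl, ?_⟩
        rcases hroute _ hx with ⟨a, b, u', v', he, hzz, _⟩ | ⟨n₂, q, w₂, he, hzz⟩
          | ⟨n₂, k₂, q, he, hzz⟩ | ⟨n₂, k₂, q, s, he, hzz⟩
          | ⟨c, ⟨a, b, u', v', he, rfl, hlt⟩, ⟨n₃, q, w₂, hce, hzz⟩⟩
          | ⟨c, ⟨a, b, u', v', he, rfl, hlt⟩, ⟨n₃, k₃, q, hce, hzz⟩⟩
          | ⟨c, ⟨a, b, u', v', he, rfl, hlt⟩, ⟨n₃, k₃, q, s, hce, hzz⟩⟩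
        · -- sq1: coordinates would match
          exfalso
          simp only [Prod.mk.injEq] at he hzz
          exact hco ⟨hzz.1.trans he.1.symm, hzz.2.1.trans he.2.1.symm⟩
        · -- sq2: component would be a word
          exfalso; simp at he
        · -- sq3
          simp only [Prod.mk.injEq, Option.some.injEq, Sum.inl.injEq] at he hzz
          obtain ⟨_, _, rfl, rfl⟩ := he
          refine ⟨word1 k, hzz.1, ?_⟩
          simp [word1]
        · -- sq4
          simp only [Prod.mk.injEq, Option.some.injEq, Sum.inl.injEq] at he hzz
          obtain ⟨_, _, rfl, rfl⟩ := he
          exact ⟨wordSnoc s k, hzz.1, mem_le_sum (by simp [wordSnoc])⟩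
        · -- sq1;sq2 : impossible, Mlt (inl k) (inr w₂)
          exfalso
          simp only [Prod.mk.injEq] at he hce
          obtain ⟨rfl, rfl, rfl⟩ := he
          obtain ⟨_, _, rfl⟩ := hce
          rcases hlt with ⟨_, hnone⟩ | ⟨p₁, a', b', hu, hv, hab⟩
          · simp at hnone
          · simp only [Option.some.injEq, Prod.mk.injEq] at hu hv
            obtain ⟨rfl, rfl⟩ := hu
            obtain ⟨rfl, rfl⟩ := hv
            exact hab.1.elim
        · -- sq1;sq3
          simp only [Prod.mk.injEq] at he hce hzz
          obtain ⟨rfl, rfl, rfl⟩ := he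
          obtain ⟨_, _, rfl⟩ := hce
          rcases hlt with ⟨_, hnone⟩ | ⟨p₁, a', b', hu, hv, hab⟩
          · simp at hnone
          · simp only [Option.some.injEq, Prod.mk.injEq] at hu hv
            obtain ⟨rfl, rfl⟩ := hu
            obtain ⟨rfl, rfl⟩ := hv
            have hk : k ≤ k₃ := hab.1
            exact ⟨word1 k₃, hzz.1, by simpa [word1] using hk⟩
        · -- sq1;sq4
          simp only [Prod.mk.injEq] at he hce hzz
          obtain ⟨rfl, rfl, rfl⟩ := he
          obtain ⟨_, _, rfl⟩ := hce
          rcases hlt with ⟨_, hnone⟩ | ⟨p₁, a', b', hu, hv, hab⟩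
          · simp at hnone
          · simp only [Option.some.injEq, Prod.mk.injEq] at hu hv
            obtain ⟨rfl, rfl⟩ := hu
            obtain ⟨rfl, rfl⟩ := hv
            have hk : k ≤ k₃ := hab.1
            exact ⟨wordSnoc s k₃, hzz.1,
              le_trans hk (mem_le_sum (by simp [wordSnoc]))⟩
      obtain ⟨k₀', hk₀', w₀, hw₀, _⟩ := key x₀ he₀
      apply hMbdd (Sum.inl w₀.1.sum)
      intro x hx
      obtain ⟨k, rfl, w, hw, hkw⟩ := key x hx
      have hww : w = w₀ := hif.finj p (hw.symm.trans hw₀)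
      subst hww
      exact hkw
    · -- all components are words
      have key : ∀ x : Mt, (m, n, some (p, x)) ∈ D →
          ∃ w, x = Sum.inr w ∧ ∃ w' : NWord, m' = f p w' ∧ wordLE w w' := by
        intro x hx
        obtain ⟨w, rfl⟩ := hW x hx
        refine ⟨w, rfl, ?_⟩
        rcases hroute _ hx with ⟨a, b, u', v', he, hzz, _⟩ | ⟨n₂, q, w₂, he, hzz⟩
          | ⟨n₂, k₂, q, he, hzz⟩ | ⟨n₂, k₂, q, s, he, hzz⟩
          | ⟨c, ⟨a, b, u', v', he, rfl, hlt⟩, ⟨n₃, q, w₂, hce, hzz⟩⟩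
          | ⟨c, ⟨a, b, u', v', he, rfl, hlt⟩, ⟨n₃, k₃, q, hce, hzz⟩⟩
          | ⟨c, ⟨a, b, u', v', he, rfl, hlt⟩, ⟨n₃, k₃, q, s, hce, hzz⟩⟩
        · exfalso
          simp only [Prod.mk.injEq] at he hzz
          exact hco ⟨hzz.1.trans he.1.symm, hzz.2.1.trans he.2.1.symm⟩
        · -- sq2 direct
          simp only [Prod.mk.injEq, Option.some.injEq, Sum.inr.injEq] at he hzz
          obtain ⟨_, _, rfl, rfl⟩ := he
          exact ⟨w, hzz.1, List.prefix_refl _⟩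
        · exfalso; simp at he
        · exfalso; simp at he
        · -- sq1;sq2
          simp only [Prod.mk.injEq] at he hce hzz
          obtain ⟨rfl, rfl, rfl⟩ := he
          obtain ⟨_, _, rfl⟩ := hce
          rcases hlt with ⟨_, hnone⟩ | ⟨p₁, a', b', hu, hv, hab⟩
          · simp at hnone
          · simp only [Option.some.injEq, Prod.mk.injEq] at hu hv
            obtain ⟨rfl, rfl⟩ := hu
            obtain ⟨rfl, rfl⟩ := hv
            exact ⟨w₂, hzz.1, hab.1⟩
        · -- sq1;sq3 : Mlt (inr w) (inl k₃) impossible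
          exfalso
          simp only [Prod.mk.injEq] at he hce
          obtain ⟨rfl, rfl, rfl⟩ := he
          obtain ⟨_, _, rfl⟩ := hce
          rcases hlt with ⟨_, hnone⟩ | ⟨p₁, a', b', hu, hv, hab⟩
          · simp at hnone
          · simp only [Option.some.injEq, Prod.mk.injEq] at hu hv
            obtain ⟨rfl, rfl⟩ := hu
            obtain ⟨rfl, rfl⟩ := hv
            exact hab.1.elim
        · -- sq1;sq4 : same
          exfalso
          simp only [Prod.mk.injEq] at he hce
          obtain ⟨rfl, rfl, rfl⟩ := he
          obtain ⟨_, _, rfl⟩ := hce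
          rcases hlt with ⟨_, hnone⟩ | ⟨p₁, a', b', hu, hv, hab⟩
          · simp at hnone
          · simp only [Option.some.injEq, Prod.mk.injEq] at hu hv
            obtain ⟨rfl, rfl⟩ := hu
            obtain ⟨rfl, rfl⟩ := hv
            exact hab.1.elim
      obtain ⟨w₀', hw₀', u₀, hu₀, _⟩ := key x₀ he₀
      apply hMbdd (Sum.inr u₀)
      intro x hx
      obtain ⟨w, rfl, w', hw', hle⟩ := key x hx
      have hww : w' = u₀ := hif.finj p (hw'.symm.trans hu₀)
      subst hww
      exact hle

end BCore

section P1Aux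

variable {i : Pairt → Set ℕ} {f : Pairt → NWord → ℕ}

lemma P1le_top (x : P1t) : P1le f x P1top := by
  by_cases h : x = P1top
  · exact Or.inl h
  · exact Or.inr (Or.inr (Or.inr (Or.inr (Or.inl ⟨h, rfl⟩))))

lemma P1top_not_lt {y : P1t} : ¬ P1lt f P1top y := by
  rintro (⟨g, a, b, he, _, _⟩ | ⟨b, c, he, _, _⟩ | ⟨g, a, he, _⟩ | ⟨hne, _⟩ | ⟨g, a, b, he, _, _⟩)
  · simp [P1top] at he
  · simp [P1top, P1ofB] at he
  · simp [P1top] at he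
  · exact hne rfl
  · simp [P1top] at he

lemma P1lt_tgt_inl {x : P1t} {g : ℕ → ℕ} {n : ℕ} (h : P1lt f x (Sum.inl (g, n))) :
    ∃ k, x = Sum.inl (g, k) ∧ k < n := by
  rcases h with ⟨g', a, b, hx, he, hab⟩ | ⟨b, c, _, he, _⟩ | ⟨g', a, _, he⟩ | ⟨_, he⟩
    | ⟨g', a, b, _, _, he⟩
  · simp only [Sum.inl.injEq, Prod.mk.injEq] at he
    obtain ⟨rfl, rfl⟩ := he
    exact ⟨a, hx, hab⟩
  · simp [P1ofB] at he
  · simp [P1ofB] at he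
  · simp [P1top] at he
  · simp [P1ofB] at he

lemma P1le_tgt_inl {x : P1t} {g : ℕ → ℕ} {n : ℕ} (h : P1le f x (Sum.inl (g, n))) :
    ∃ k, x = Sum.inl (g, k) ∧ k ≤ n := by
  rcases h with rfl | hlt
  · exact ⟨n, rfl, le_refl n⟩
  · obtain ⟨k, hk, hlt'⟩ := P1lt_tgt_inl hlt
    exact ⟨k, hk, le_of_lt hlt'⟩

lemma P1lt_tgt_B {x : P1t} {b : Bt} (h : P1lt f x (P1ofB b)) :
    (∃ c, x = P1ofB c ∧ Bsq f c b) ∨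
    (∃ g k m, x = Sum.inl (g, k) ∧ k ≤ m ∧ b = (g m, m, (none : Lt))) := by
  rcases h with ⟨g, a, c, _, he, _⟩ | ⟨c, d, hx, he, hcd⟩ | ⟨g, a, hx, he⟩ | ⟨_, he⟩
    | ⟨g, a, c, hx, hac, he⟩
  · simp [P1ofB] at he
  · left
    obtain rfl : b = d := by simpa [P1ofB] using he
    exact ⟨c, hx, hcd⟩
  · right
    obtain rfl : b = (g a, a, none) := by simpa [P1ofB] using he
    exact ⟨g, a, a, hx, le_refl a, rfl⟩
  · simp [P1ofB, P1top] at he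
  · right
    obtain rfl : b = (g c, c, none) := by simpa [P1ofB] using he
    exact ⟨g, a, c, hx, le_of_lt hac, rfl⟩

lemma P1lt_src_ne_top {x y : P1t} (h : P1lt f x y) : x ≠ P1top := by
  rintro rfl
  exact P1top_not_lt h

lemma P1lt_trans {x y z : P1t} (h1 : P1lt f x y) (h2 : P1lt f y z) : P1lt f x z := by
  rcases h2 with ⟨g, a, b, rfl, rfl, hab⟩ | ⟨c, d, rfl, rfl, hcd⟩ | ⟨g, a, rfl, rfl⟩
    | ⟨hne, rfl⟩ | ⟨g, a, b, rfl, hab, rfl⟩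
  · obtain ⟨k, rfl, hk⟩ := P1lt_tgt_inl h1
    exact Or.inl ⟨g, k, b, rfl, rfl, lt_trans hk hab⟩
  · rcases P1lt_tgt_B h1 with ⟨e, rfl, hec⟩ | ⟨g, k, mm, rfl, hkm, rfl⟩
    · exact Or.inr (Or.inl ⟨e, d, rfl, rfl, Bsq_trans hec hcd⟩)
    · obtain ⟨p, w, hpw⟩ := Bsq_src hcd
      simp at hpw
  · obtain ⟨k, rfl, hk⟩ := P1lt_tgt_inl h1
    exact Or.inr (Or.inr (Or.inr (Or.inr ⟨g, k, a, rfl, hk, rfl⟩)))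
  · exact Or.inr (Or.inr (Or.inr (Or.inl ⟨P1lt_src_ne_top h1, rfl⟩)))
  · obtain ⟨k, rfl, hk⟩ := P1lt_tgt_inl h1
    exact Or.inr (Or.inr (Or.inr (Or.inr ⟨g, k, b, rfl, lt_trans hk hab, rfl⟩)))

lemma P1lt_irrefl {x : P1t} (h : P1lt f x x) : False := by
  rcases h with ⟨g, a, b, hx, hy, hab⟩ | ⟨c, d, hx, hy, hcd⟩ | ⟨g, a, hx, hy⟩ | ⟨hne, he⟩
    | ⟨g, a, b, hx, hab, hy⟩
  · rw [hx] at hy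
    simp only [Sum.inl.injEq, Prod.mk.injEq] at hy
    omega
  · rw [hx] at hy
    obtain rfl : c = d := by simpa [P1ofB] using hy
    exact Bsq_irrefl hcd
  · rw [hx] at hy
    simp [P1ofB] at hy
  · exact hne he
  · rw [hx] at hy
    simp [P1ofB] at hy

lemma P1le_trans {x y z : P1t} (h1 : P1le f x y) (h2 : P1le f y z) : P1le f x z := by
  rcases h1 with rfl | h1
  · exact h2
  rcases h2 with rfl | h2
  · exact Or.inr h1
  · exact Or.inr (P1lt_trans h1 h2)

lemma P1le_antisymm {x y : P1t} (h1 : P1le f x y) (h2 : P1le f y x) : x = y := by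
  rcases h1 with rfl | h1
  · rfl
  rcases h2 with rfl | h2
  · rfl
  · exact absurd (P1lt_trans h1 h2) fun h => P1lt_irrefl h

lemma P1le_B_B {b c : Bt} (h : P1le f (P1ofB b) (P1ofB c)) : Ble f b c := by
  rcases h with he | hlt
  · left
    simpa [P1ofB] using he
  · rcases P1lt_tgt_B hlt with ⟨e, he, hec⟩ | ⟨g, k, mm, he, _, _⟩
    · obtain rfl : b = e := by simpa [P1ofB] using he
      exact Or.inr hec
    · simp [P1ofB] at he

lemma Ble_to_P1le {b c : Bt} (h : Ble f b c) : P1le f (P1ofB b) (P1ofB c) := by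
  rcases h with rfl | h
  · exact Or.inl rfl
  · exact Or.inr (Or.inr (Or.inl ⟨b, c, rfl, rfl, h⟩))

lemma P1le_inl_B {g : ℕ → ℕ} {n : ℕ} {b : Bt} (h : P1le f (Sum.inl (g, n)) (P1ofB b)) :
    ∃ m, n ≤ m ∧ b = (g m, m, (none : Lt)) := by
  rcases h with he | hlt
  · simp [P1ofB] at he
  · rcases P1lt_tgt_B hlt with ⟨c, he, _⟩ | ⟨g', k, m, he, hkm, rfl⟩
    · simp [P1ofB] at he
    · simp only [Sum.inl.injEq, Prod.mk.injEq] at he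
      obtain ⟨rfl, rfl⟩ := he
      exact ⟨m, hkm, rfl⟩

lemma infinite_exists_gt {N : Set ℕ} (h : N.Infinite) (m : ℕ) : ∃ k ∈ N, m < k := by
  by_contra hc
  push_neg at hc
  exact h ((Set.finite_Iic m).subset fun k hk => hc k hk)

/-- The dichotomy for directed subsets of `P₁` without a greatest element. -/
lemma P1dich {D : Set P1t} (hdir : DirectedOn' (P1le f) D)
    (hng : ¬ ∃ m ∈ D, ∀ x ∈ D, P1le f x m) :
    (∃ (f₀ : ℕ → ℕ) (N : Set ℕ), N.Infinite ∧
      D = {x : P1t | ∃ n ∈ N, x = Sum.inl (f₀, n)}) ∨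
    (∀ x ∈ D, ∃ y ∈ D, (∃ b : Bt, y = P1ofB b) ∧ P1le f x y) := by
  classical
  obtain ⟨⟨x₁, hx₁⟩, hup⟩ := hdir
  by_cases hcof : ∀ x ∈ D, ∃ y ∈ D, (∃ b : Bt, y = P1ofB b) ∧ P1le f x y
  · exact Or.inr hcof
  left
  push_neg at hcof
  obtain ⟨x₀, hx₀, hx₀b⟩ := hcof
  have htop : P1top ∉ D := fun h => hng ⟨P1top, h, fun x _ => P1le_top x⟩
  obtain ⟨g, n₀⟩ | xb | xu := x₀
  rotate_left
  · exact absurd (Or.inl rfl : P1le f (P1ofB xb) (P1ofB xb)) (hx₀b _ hx₀ ⟨xb, rfl⟩)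
  · cases xu
    exact absurd hx₀ htop
  have hshape : ∀ x ∈ D, ∃ k, x = Sum.inl (g, k) := by
    intro x hx
    obtain ⟨z, hz, hxz, h0z⟩ := hup _ hx _ hx₀
    obtain ⟨gz, mz⟩ | zb | zu := z
    · obtain ⟨k₀, he₀, _⟩ := P1le_tgt_inl h0z
      simp only [Sum.inl.injEq, Prod.mk.injEq] at he₀
      obtain ⟨rfl, _⟩ := he₀
      obtain ⟨k, hk, _⟩ := P1le_tgt_inl hxz
      exact ⟨k, hk⟩
    · exact absurd h0z (hx₀b _ hz ⟨zb, rfl⟩)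
    · cases zu
      exact absurd hz htop
  refine ⟨g, {k | Sum.inl (g, k) ∈ D}, ?_, ?_⟩
  · by_contra hfin
    rw [Set.not_infinite] at hfin
    have hNne : Set.Nonempty {k | Sum.inl (g, k) ∈ D} := ⟨n₀, hx₀⟩
    have hmem := Nat.sSup_mem hNne hfin.bddAbove
    apply hng
    refine ⟨Sum.inl (g, sSup {k | Sum.inl (g, k) ∈ D}), hmem, fun x hx => ?_⟩
    obtain ⟨k, rfl⟩ := hshape x hx
    have hk : k ≤ sSup {k | Sum.inl (g, k) ∈ D} := le_csSup hfin.bddAbove hx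
    by_cases he : k = sSup {k | Sum.inl (g, k) ∈ D}
    · exact Or.inl (by rw [he])
    · exact Or.inr (Or.inl ⟨g, k, _, rfl, rfl, lt_of_le_of_ne hk he⟩)
  · ext x
    constructor
    · intro hx
      obtain ⟨k, rfl⟩ := hshape x hx
      exact ⟨k, hx, rfl⟩
    · rintro ⟨k, hk, rfl⟩
      exact hk

end P1Aux

/-- The poset `P₁ = (ℕ^ℕ × ℕ) ∪ B ∪ {⊤₁}` is a dcpo; moreover, every directed
subset of `P₁` without a greatest element either is of the form `{(f₀, n) : n ∈ N}` for a
fixed `f₀ ∈ ℕ^ℕ` and an infinite `N ⊆ ℕ`, or is cofinally contained in `B`. -/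
theorem P1_isDcpo_and_directed_form (i : Pairt → Set ℕ) (f : Pairt → NWord → ℕ)
    (hif : IFData i f) :
    IsPartialOrder P1t (P1le f) ∧
    IsDcpoRel (P1le f) ∧
    ∀ D : Set P1t, DirectedOn' (P1le f) D → (¬ ∃ m ∈ D, ∀ x ∈ D, P1le f x m) →
      (∃ (f₀ : ℕ → ℕ) (N : Set ℕ), N.Infinite ∧
        D = {x : P1t | ∃ n ∈ N, x = Sum.inl (f₀, n)}) ∨
      (∀ x ∈ D, ∃ y ∈ D, (∃ b : Bt, y = P1ofB b) ∧ P1le f x y) := by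
  refine ⟨?_, ?_, fun D hdir hng => P1dich hdir hng⟩
  · exact { refl := fun x => Or.inl rfl
            trans := fun x y z h1 h2 => P1le_trans h1 h2
            antisymm := fun x y h1 h2 => P1le_antisymm h1 h2 }
  intro D hdir
  by_cases hg : ∃ m ∈ D, ∀ x ∈ D, P1le f x m
  · obtain ⟨m, hm, hmax⟩ := hg
    exact ⟨m, hmax, fun v hv => hv m hm⟩
  rcases P1dich hdir hg with ⟨g, N, hNinf, rfl⟩ | hcof
  · -- the directed set is a strictly increasing sequence on a fixed function
    refine ⟨P1top, fun x hx => P1le_top x, ?_⟩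
    intro v hv
    obtain ⟨gv, mv⟩ | b | u := v
    · exfalso
      obtain ⟨k, hkN, hk⟩ := infinite_exists_gt hNinf mv
      obtain ⟨k', he, hk'⟩ := P1le_tgt_inl (hv _ ⟨k, hkN, rfl⟩)
      simp only [Sum.inl.injEq, Prod.mk.injEq] at he
      obtain ⟨_, rfl⟩ := he
      omega
    · exfalso
      obtain ⟨k1, hk1, hgt1⟩ := infinite_exists_gt hNinf b.2.1
      obtain ⟨m1, hle1, hb⟩ := P1le_inl_B (hv _ ⟨k1, hk1, rfl⟩)
      subst hb
      simp only at hgt1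
      omega
    · cases u
      exact Or.inl rfl
  · -- the directed set is cofinally contained in B
    have hD'ne : Set.Nonempty {b : Bt | P1ofB b ∈ D} := by
      obtain ⟨x, hx⟩ := hdir.1
      obtain ⟨y, hy, ⟨b, rfl⟩, _⟩ := hcof x hx
      exact ⟨b, hy⟩
    have hdir' : DirectedOn' (Ble f) {b : Bt | P1ofB b ∈ D} := by
      refine ⟨hD'ne, ?_⟩
      intro b hb c hc
      obtain ⟨z, hz, h1, h2⟩ := hdir.2 _ hb _ hc
      obtain ⟨y, hy, ⟨e, rfl⟩, hzy⟩ := hcof z hz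
      exact ⟨e, hy, P1le_B_B (P1le_trans h1 hzy), P1le_B_B (P1le_trans h2 hzy)⟩
    have hng' : ¬ ∃ gb ∈ {b : Bt | P1ofB b ∈ D}, ∀ b ∈ {b : Bt | P1ofB b ∈ D}, Ble f b gb := by
      rintro ⟨gb, hgb, hgbmax⟩
      apply hg
      refine ⟨P1ofB gb, hgb, fun x hx => ?_⟩
      obtain ⟨y, hy, ⟨e, rfl⟩, hxy⟩ := hcof x hx
      exact P1le_trans hxy (Ble_to_P1le (hgbmax e hy))
    obtain ⟨m, n, p, hsh, hub, huniq⟩ := Bcore hif hdir' hng'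
    refine ⟨P1ofB (m, n, none), ?_, ?_⟩
    · intro x hx
      obtain ⟨y, hy, ⟨e, rfl⟩, hxy⟩ := hcof x hx
      exact P1le_trans hxy (Ble_to_P1le (hub e hy))
    · intro v hv
      obtain ⟨gv, mv⟩ | b | u := v
      · exfalso
        obtain ⟨e, he⟩ := hD'ne
        obtain ⟨k, hk, _⟩ := P1le_tgt_inl (hv _ he)
        simp [P1ofB] at hk
      · have hall : ∀ e ∈ {b : Bt | P1ofB b ∈ D}, Ble f e b :=
          fun e he => P1le_B_B (hv _ he)
        have hb := huniq b hall
        rw [hb]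
        exact Or.inl rfl
      · cases u
        exact P1le_top _
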